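/- Let μ be a non-negative measure on ℝ^d. Then ∫₀^T ∫_{ℝ^d} (sin(t|ξ|)/|ξ|)² μ(dξ) dt < ∞ for some (equivalently, every) T > 0 if and only if ∫_{ℝ^d} (1+|ξ|²)^{-1} μ(dξ) < ∞, where the integrand is interpreted as t² when ξ = 0. -/

import Mathlib

open scoped Classical

open Real Set MeasureTheory

namespace WaveDalangAux

noncomputable def g (r t : ℝ) : ℝ := if r = 0 then t ^ 2 else (Real.sin (t * r) / r) ^ 2

lemma g_nonneg (r t : ℝ) : 0 ≤ g r t := by unfold g; split <;> positivity

lemma g_le {T r t : ℝ} (hr : 0 ≤ r) (ht : t ∈ Ioc 0 T) :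
    g r t ≤ (1 + T ^ 2) * (1 / (1 + r ^ 2)) := by
  obtain ⟨ht0, htT⟩ := ht
  unfold g
  rcases eq_or_lt_of_le hr with h | hrpos
  · rw [if_pos h.symm, ← h]
    norm_num
    nlinarith
  · rw [if_neg (ne_of_gt hrpos)]
    have hkey : Real.sin (t * r) ^ 2 * (1 + r ^ 2) ≤ (1 + t ^ 2) * r ^ 2 := by
      rcases le_or_gt (t * r) 1 with h1 | h1
      · have hs : Real.sin (t * r) ≤ t * r := Real.sin_le (by positivity)
        have hs0 : 0 ≤ Real.sin (t * r) := by
          apply Real.sin_nonneg_of_nonneg_of_le_pi (by positivity)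
          linarith [Real.pi_gt_three]
        have hsq : Real.sin (t * r) ^ 2 ≤ (t * r) ^ 2 :=
          sq_le_sq' (by linarith [mul_pos ht0 hrpos]) hs
        have h1' : (t * r) ^ 2 ≤ 1 := by nlinarith [mul_pos ht0 hrpos]
        nlinarith [mul_le_mul_of_nonneg_right hsq (by positivity : (0:ℝ) ≤ 1 + r ^ 2),
          mul_le_mul_of_nonneg_right h1' (sq_nonneg r)]
      · have hsq : Real.sin (t * r) ^ 2 ≤ 1 := Real.sin_sq_le_one (t * r)
        nlinarith
    rw [div_pow, div_le_iff₀ (by positivity), mul_assoc]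
    calc Real.sin (t * r) ^ 2 ≤ (1 + t ^ 2) * r ^ 2 / (1 + r ^ 2) := by
          rw [le_div_iff₀ (by positivity)]; linarith
      _ ≤ (1 + T ^ 2) * (1 / (1 + r ^ 2) * r ^ 2) := by
          rw [div_eq_mul_inv, one_div]
          have : (1 + t ^ 2) ≤ 1 + T ^ 2 := by nlinarith
          have h2 : (0:ℝ) < 1 + r ^ 2 := by positivity
          calc (1 + t ^ 2) * r ^ 2 * (1 + r ^ 2)⁻¹
              ≤ (1 + T ^ 2) * r ^ 2 * (1 + r ^ 2)⁻¹ := by gcongr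
            _ = (1 + T ^ 2) * ((1 + r ^ 2)⁻¹ * r ^ 2) := by ring

lemma g_measurable (r : ℝ) : Measurable (g r) := by
  unfold g
  split_ifs with h
  · exact measurable_id.pow_const 2
  · exact ((Real.measurable_sin.comp (measurable_id.mul_const r)).div_const r).pow_const 2

lemma integral_sin_sq' (r T : ℝ) (hr : r ≠ 0) :
    ∫ t in (0:ℝ)..T, Real.sin (t * r) ^ 2 = T / 2 - Real.sin (2 * T * r) / (4 * r) := by
  have key : ∀ t : ℝ, HasDerivAt (fun t : ℝ => t / 2 - Real.sin (2 * t * r) / (4 * r))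
      (Real.sin (t * r) ^ 2) t := by
    intro t
    have h1 : HasDerivAt (fun t : ℝ => 2 * t * r) (2 * r) t := by
      simpa using ((hasDerivAt_id t).const_mul 2).mul_const r
    have h2 : HasDerivAt (fun t : ℝ => Real.sin (2 * t * r)) (Real.cos (2 * t * r) * (2 * r)) t :=
      h1.sin
    have h3 : HasDerivAt (fun t : ℝ => t / 2 - Real.sin (2 * t * r) / (4 * r))
        (1 / 2 - Real.cos (2 * t * r) * (2 * r) / (4 * r)) t :=
      ((hasDerivAt_id t).div_const 2).sub (h2.div_const (4 * r))
    convert h3 using 1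
    rw [Real.sin_sq_eq_half_sub]
    have h4 : 2 * (t * r) = 2 * t * r := by ring
    rw [h4]
    field_simp
    ring
  have hcont : Continuous fun t : ℝ => Real.sin (t * r) ^ 2 := by
    exact (Real.continuous_sin.comp (continuous_id.mul continuous_const)).pow 2
  rw [intervalIntegral.integral_eq_sub_of_hasDerivAt (fun t _ => key t)
      (hcont.intervalIntegrable 0 T)]
  simp

lemma g_lower_of_small {T r t : ℝ} (hT : 0 < T) (hr : 0 ≤ r) (hTr : T * r ≤ 1)
    (ht : t ∈ Ioc (T / 2) T) : 9 / 64 * T ^ 2 ≤ g r t := by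
  obtain ⟨ht0, htT⟩ := ht
  have ht0' : 0 < t := lt_trans (by positivity) ht0
  unfold g
  rcases eq_or_lt_of_le hr with h | hrpos
  · rw [if_pos h.symm]; nlinarith
  · rw [if_neg (ne_of_gt hrpos)]
    have hx1 : t * r ≤ 1 := le_trans (by nlinarith) hTr
    have hx0 : 0 < t * r := mul_pos ht0' hrpos
    have hx2 : (t * r) ^ 2 ≤ 1 := by nlinarith
    have hx3 : (t * r) ^ 3 ≤ t * r := by nlinarith
    have hs : 3 / 4 * (t * r) ≤ Real.sin (t * r) := by
      have := Real.sin_gt_sub_cube hx0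
      linarith
    rw [div_pow, le_div_iff₀ (by positivity)]
    have hs2 : (3 / 4 * (t * r)) ^ 2 ≤ Real.sin (t * r) ^ 2 :=
      pow_le_pow_left₀ (by positivity) hs 2
    have ht2 : T ^ 2 / 4 ≤ t ^ 2 := by nlinarith
    nlinarith [mul_le_mul_of_nonneg_right ht2 (sq_nonneg r)]

lemma lintegral_g_lower (T : ℝ) (hT : 0 < T) (r : ℝ) (hr : 0 ≤ r) :
    ENNReal.ofReal (min (T / 4) (T ^ 3 / 16) * (1 / (1 + r ^ 2))) ≤
      ∫⁻ t in Ioc (0:ℝ) T, ENNReal.ofReal (g r t) := by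
  have hfrac0 : (0:ℝ) < 1 / (1 + r ^ 2) := by positivity
  have hfrac1 : 1 / (1 + r ^ 2) ≤ 1 := by
    rw [div_le_one (by positivity)]; nlinarith
  rcases le_or_gt (T * r) 1 with hTr | hTr
  · -- small frequency: restrict to Ioc (T/2) T
    calc ENNReal.ofReal (min (T / 4) (T ^ 3 / 16) * (1 / (1 + r ^ 2)))
        ≤ ENNReal.ofReal (9 / 64 * T ^ 2 * (T / 2)) := by
          apply ENNReal.ofReal_le_ofReal
          have h1 : min (T / 4) (T ^ 3 / 16) ≤ T ^ 3 / 16 := min_le_right _ _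
          have h2 : min (T / 4) (T ^ 3 / 16) * (1 / (1 + r ^ 2)) ≤ T ^ 3 / 16 * 1 := by
            apply mul_le_mul h1 hfrac1 (le_of_lt hfrac0) (by positivity)
          nlinarith
      _ = ENNReal.ofReal (9 / 64 * T ^ 2) * volume (Ioc (T / 2) T) := by
          rw [Real.volume_Ioc, ← ENNReal.ofReal_mul (by positivity)]
          congr 1
          ring
      _ = ∫⁻ t in Ioc (T / 2) T, ENNReal.ofReal (9 / 64 * T ^ 2) := (setLIntegral_const _ _).symm
      _ ≤ ∫⁻ t in Ioc (T / 2) T, ENNReal.ofReal (g r t) := by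
          apply setLIntegral_mono (ENNReal.measurable_ofReal.comp (g_measurable r))
          exact fun t ht => ENNReal.ofReal_le_ofReal (g_lower_of_small hT hr hTr ht)
      _ ≤ ∫⁻ t in Ioc (0:ℝ) T, ENNReal.ofReal (g r t) := by
          apply lintegral_mono' (Measure.restrict_mono (fun t ht => ?_) le_rfl) le_rfl
          exact ⟨lt_trans (by positivity) ht.1, ht.2⟩
  · -- large frequency: exact computation
    have hrpos : 0 < r := by nlinarith
    have hr0 : r ≠ 0 := ne_of_gt hrpos
    have hg : ∀ t, g r t = Real.sin (t * r) ^ 2 / r ^ 2 := by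
      intro t; unfold g; rw [if_neg hr0, div_pow]
    have hcont : Continuous (g r) := by
      simp only [funext hg]
      exact ((Real.continuous_sin.comp (continuous_id.mul continuous_const)).pow 2).div_const _
    have hint : IntegrableOn (g r) (Ioc 0 T) volume := hcont.integrableOn_Ioc
    rw [← ofReal_integral_eq_lintegral_ofReal hint
      (Filter.Eventually.of_forall fun t => g_nonneg r t)]
    apply ENNReal.ofReal_le_ofReal
    have hcalc : ∫ t in Ioc (0:ℝ) T, g r t
        = (T / 2 - Real.sin (2 * T * r) / (4 * r)) / r ^ 2 := by
      rw [← intervalIntegral.integral_of_le hT.le]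
      simp only [hg]
      rw [intervalIntegral.integral_div, integral_sin_sq' r T hr0]
    rw [hcalc]
    have hs1 : Real.sin (2 * T * r) ≤ 1 := Real.sin_le_one _
    have hnum : T / 4 ≤ T / 2 - Real.sin (2 * T * r) / (4 * r) := by
      have h14 : Real.sin (2 * T * r) / (4 * r) ≤ 1 / (4 * r) := by
        gcongr

      have h2 : 1 / (4 * r) ≤ T / 4 := by
        rw [div_le_div_iff₀ (by positivity) (by norm_num)]
        nlinarith
      linarith
    calc min (T / 4) (T ^ 3 / 16) * (1 / (1 + r ^ 2))
        ≤ T / 4 * (1 / r ^ 2) := by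
          apply mul_le_mul (min_le_left _ _) _ (le_of_lt hfrac0) (by positivity)
          exact one_div_le_one_div_of_le (by positivity) (by nlinarith)
      _ = (T / 4) / r ^ 2 := by ring
      _ ≤ (T / 2 - Real.sin (2 * T * r) / (4 * r)) / r ^ 2 := by gcongr

lemma lintegral_g_upper (T : ℝ) (hT : 0 < T) (r : ℝ) (hr : 0 ≤ r) :
    ∫⁻ t in Ioc (0:ℝ) T, ENNReal.ofReal (g r t) ≤
      ENNReal.ofReal (T * (1 + T ^ 2)) * ENNReal.ofReal (1 / (1 + r ^ 2)) := by
  calc ∫⁻ t in Ioc (0:ℝ) T, ENNReal.ofReal (g r t)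
      ≤ ∫⁻ _t in Ioc (0:ℝ) T, ENNReal.ofReal ((1 + T ^ 2) * (1 / (1 + r ^ 2))) := by
        apply setLIntegral_mono measurable_const
        exact fun t ht => ENNReal.ofReal_le_ofReal (g_le hr ht)
    _ = ENNReal.ofReal ((1 + T ^ 2) * (1 / (1 + r ^ 2))) * volume (Ioc (0:ℝ) T) :=
        setLIntegral_const _ _
    _ = ENNReal.ofReal (T * (1 + T ^ 2)) * ENNReal.ofReal (1 / (1 + r ^ 2)) := by
        rw [Real.volume_Ioc, sub_zero, ← ENNReal.ofReal_mul (by positivity),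
          ← ENNReal.ofReal_mul (by positivity)]
        ring_nf

lemma main_iff (d : ℕ) (μ : Measure (EuclideanSpace ℝ (Fin d))) [SFinite μ]
    (T : ℝ) (hT : 0 < T) :
    (∫⁻ t in Set.Ioc (0 : ℝ) T,
        ∫⁻ ξ, ENNReal.ofReal
          (if ξ = 0 then t ^ 2 else (Real.sin (t * ‖ξ‖) / ‖ξ‖) ^ 2) ∂μ < ⊤) ↔
      ∫⁻ ξ, ENNReal.ofReal (1 / (1 + ‖ξ‖ ^ 2)) ∂μ < ⊤ := by
  have hrw : ∀ (t : ℝ) (ξ : EuclideanSpace ℝ (Fin d)),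
      (if ξ = 0 then t ^ 2 else (Real.sin (t * ‖ξ‖) / ‖ξ‖) ^ 2) = g ‖ξ‖ t := by
    intro t ξ; unfold g; simp [norm_eq_zero]
  simp only [hrw]
  have hm : Measurable (Function.uncurry fun (t : ℝ) (ξ : EuclideanSpace ℝ (Fin d)) =>
      ENNReal.ofReal (g ‖ξ‖ t)) := by
    have heq : (Function.uncurry fun (t : ℝ) (ξ : EuclideanSpace ℝ (Fin d)) =>
        ENNReal.ofReal (g ‖ξ‖ t)) = fun p : ℝ × EuclideanSpace ℝ (Fin d) =>
          ENNReal.ofReal (if ‖p.2‖ = 0 then p.1 ^ 2 else (Real.sin (p.1 * ‖p.2‖) / ‖p.2‖) ^ 2) :=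
      rfl
    rw [heq]
    apply ENNReal.measurable_ofReal.comp
    apply Measurable.ite
    · exact measurable_snd.norm (measurableSet_singleton 0)
    · exact measurable_fst.pow_const 2
    · exact ((Real.measurable_sin.comp (measurable_fst.mul measurable_snd.norm)).div
        measurable_snd.norm).pow_const 2
  have hswap : ∫⁻ t in Set.Ioc (0 : ℝ) T, ∫⁻ ξ, ENNReal.ofReal (g ‖ξ‖ t) ∂μ
      = ∫⁻ ξ, (∫⁻ t in Set.Ioc (0 : ℝ) T, ENNReal.ofReal (g ‖ξ‖ t)) ∂μ :=
    lintegral_lintegral_swap hm.aemeasurable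
  rw [hswap]
  have hImeas : Measurable fun ξ : EuclideanSpace ℝ (Fin d) =>
      ENNReal.ofReal (1 / (1 + ‖ξ‖ ^ 2)) := by
    apply ENNReal.measurable_ofReal.comp
    exact measurable_const.div (measurable_const.add (measurable_norm.pow_const 2))
  set I := ∫⁻ ξ, ENNReal.ofReal (1 / (1 + ‖ξ‖ ^ 2)) ∂μ with hI
  have hc0 : 0 < min (T / 4) (T ^ 3 / 16) := lt_min (by positivity) (by positivity)
  have hlow : ENNReal.ofReal (min (T / 4) (T ^ 3 / 16)) * I
      ≤ ∫⁻ ξ, (∫⁻ t in Set.Ioc (0 : ℝ) T, ENNReal.ofReal (g ‖ξ‖ t)) ∂μ := by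
    rw [hI, ← lintegral_const_mul _ hImeas]
    apply lintegral_mono fun ξ => ?_
    rw [← ENNReal.ofReal_mul hc0.le]
    exact lintegral_g_lower T hT ‖ξ‖ (norm_nonneg ξ)
  have hup : ∫⁻ ξ, (∫⁻ t in Set.Ioc (0 : ℝ) T, ENNReal.ofReal (g ‖ξ‖ t)) ∂μ
      ≤ ENNReal.ofReal (T * (1 + T ^ 2)) * I := by
    rw [hI, ← lintegral_const_mul _ hImeas]
    exact lintegral_mono fun ξ => lintegral_g_upper T hT ‖ξ‖ (norm_nonneg ξ)
  constructor
  · intro h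
    by_contra hItop
    rw [not_lt, top_le_iff] at hItop
    rw [hItop, ENNReal.mul_top (by simpa using hc0)] at hlow
    exact absurd (lt_of_le_of_lt hlow h) (lt_irrefl _)
  · intro h
    exact lt_of_le_of_lt hup (ENNReal.mul_lt_top ENNReal.ofReal_lt_top h)

lemma bad_I (d : ℕ) (μ : Measure (EuclideanSpace ℝ (Fin d))) {R : ℝ} (hR : 0 < R)
    (hμ : μ (Metric.closedBall 0 R) = ⊤) :
    ∫⁻ ξ, ENNReal.ofReal (1 / (1 + ‖ξ‖ ^ 2)) ∂μ = ⊤ := by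
  have hImeas : Measurable fun ξ : EuclideanSpace ℝ (Fin d) =>
      ENNReal.ofReal (1 / (1 + ‖ξ‖ ^ 2)) :=
    ENNReal.measurable_ofReal.comp
      (measurable_const.div (measurable_const.add (measurable_norm.pow_const 2)))
  rw [eq_top_iff]
  calc (⊤ : ENNReal) = ENNReal.ofReal (1 / (1 + R ^ 2)) * μ (Metric.closedBall 0 R) := by
        rw [hμ, ENNReal.mul_top (by simp [ENNReal.ofReal_eq_zero, not_le]; positivity)]
    _ = ∫⁻ _x in Metric.closedBall 0 R, ENNReal.ofReal (1 / (1 + R ^ 2)) ∂μ :=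
        (setLIntegral_const _ _).symm
    _ ≤ ∫⁻ ξ in Metric.closedBall 0 R, ENNReal.ofReal (1 / (1 + ‖ξ‖ ^ 2)) ∂μ := by
        apply setLIntegral_mono hImeas
        intro ξ hξ
        apply ENNReal.ofReal_le_ofReal
        have hξR : ‖ξ‖ ≤ R := by simpa [dist_zero_right] using Metric.mem_closedBall.1 hξ
        apply one_div_le_one_div_of_le (by positivity)
        nlinarith [norm_nonneg ξ]
    _ ≤ ∫⁻ ξ, ENNReal.ofReal (1 / (1 + ‖ξ‖ ^ 2)) ∂μ := setLIntegral_le_lintegral _ _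

lemma bad_double (d : ℕ) (μ : Measure (EuclideanSpace ℝ (Fin d))) {R : ℝ} (hR : 1 ≤ R)
    (hμ : μ (Metric.closedBall 0 R) = ⊤) (T : ℝ) (hT : 0 < T) :
    ∫⁻ t in Set.Ioc (0 : ℝ) T,
      ∫⁻ ξ, ENNReal.ofReal
        (if ξ = 0 then t ^ 2 else (Real.sin (t * ‖ξ‖) / ‖ξ‖) ^ 2) ∂μ = ⊤ := by
  have hR0 : 0 < R := lt_of_lt_of_le one_pos hR
  set s : Set ℝ := Set.Ioc 0 (min T (1 / R)) with hs
  have hεpos : 0 < min T (1 / R) := lt_min hT (by positivity)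
  have hsub : s ⊆ Set.Ioc 0 T := fun t ht => ⟨ht.1, le_trans ht.2 (min_le_left _ _)⟩
  rw [eq_top_iff]
  have hinner : ∀ t ∈ s, (∫⁻ ξ, ENNReal.ofReal
      (if ξ = 0 then t ^ 2 else (Real.sin (t * ‖ξ‖) / ‖ξ‖) ^ 2) ∂μ) = ⊤ := by
    intro t ht
    obtain ⟨ht0, htR⟩ := ht
    have hFmeas : Measurable fun ξ : EuclideanSpace ℝ (Fin d) => ENNReal.ofReal
        (if ξ = 0 then t ^ 2 else (Real.sin (t * ‖ξ‖) / ‖ξ‖) ^ 2) := by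
      apply ENNReal.measurable_ofReal.comp
      apply Measurable.ite (measurableSet_eq)
      · exact measurable_const
      · exact ((Real.measurable_sin.comp (measurable_const.mul measurable_norm)).div
          measurable_norm).pow_const 2
    rw [eq_top_iff]
    calc (⊤ : ENNReal) = ENNReal.ofReal (9 / 16 * t ^ 2) * μ (Metric.closedBall 0 R) := by
          rw [hμ, ENNReal.mul_top (by simp [ENNReal.ofReal_eq_zero, not_le]; positivity)]
      _ = ∫⁻ _x in Metric.closedBall 0 R, ENNReal.ofReal (9 / 16 * t ^ 2) ∂μ :=
          (setLIntegral_const _ _).symm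
      _ ≤ ∫⁻ ξ in Metric.closedBall 0 R, ENNReal.ofReal
            (if ξ = 0 then t ^ 2 else (Real.sin (t * ‖ξ‖) / ‖ξ‖) ^ 2) ∂μ := by
          apply setLIntegral_mono hFmeas
          intro ξ hξ
          apply ENNReal.ofReal_le_ofReal
          have hξR : ‖ξ‖ ≤ R := by simpa [dist_zero_right] using Metric.mem_closedBall.1 hξ
          by_cases hξ0 : ξ = 0
          · rw [if_pos hξ0]; nlinarith
          · rw [if_neg hξ0]
            have hrpos : 0 < ‖ξ‖ := norm_pos_iff.2 hξ0
            have hx0 : 0 < t * ‖ξ‖ := mul_pos ht0 hrpos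
            have hx1 : t * ‖ξ‖ ≤ 1 := by
              have h1 : t ≤ 1 / R := le_trans htR (min_le_right _ _)
              calc t * ‖ξ‖ ≤ (1 / R) * R := by
                    apply mul_le_mul h1 hξR (norm_nonneg ξ) (by positivity)
                _ = 1 := by field_simp
            have hx2 : (t * ‖ξ‖) ^ 2 ≤ 1 := by nlinarith
            have hx3 : (t * ‖ξ‖) ^ 3 ≤ t * ‖ξ‖ := by nlinarith
            have hsin : 3 / 4 * (t * ‖ξ‖) ≤ Real.sin (t * ‖ξ‖) := by
              have := Real.sin_gt_sub_cube hx0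
              linarith
            have hs2 : (3 / 4 * (t * ‖ξ‖)) ^ 2 ≤ Real.sin (t * ‖ξ‖) ^ 2 :=
              pow_le_pow_left₀ (by positivity) hsin 2
            rw [div_pow, le_div_iff₀ (by positivity)]
            nlinarith
      _ ≤ ∫⁻ ξ, ENNReal.ofReal
            (if ξ = 0 then t ^ 2 else (Real.sin (t * ‖ξ‖) / ‖ξ‖) ^ 2) ∂μ :=
          setLIntegral_le_lintegral _ _
  calc (⊤ : ENNReal) = ∫⁻ t in Set.Ioc (0 : ℝ) T, s.indicator (fun _ => (⊤ : ENNReal)) t := by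
        rw [lintegral_indicator_const measurableSet_Ioc, Measure.restrict_apply measurableSet_Ioc,
          Set.inter_eq_left.2 hsub, Real.volume_Ioc,
          ENNReal.top_mul (by simp only [sub_zero, ne_eq, ENNReal.ofReal_eq_zero, not_le]; exact hεpos)]
    _ ≤ ∫⁻ t in Set.Ioc (0 : ℝ) T, ∫⁻ ξ, ENNReal.ofReal
          (if ξ = 0 then t ^ 2 else (Real.sin (t * ‖ξ‖) / ‖ξ‖) ^ 2) ∂μ := by
        apply lintegral_mono fun t => ?_
        by_cases ht : t ∈ s
        · rw [Set.indicator_of_mem ht, hinner t ht]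
        · rw [Set.indicator_of_notMem ht]; exact zero_le

end WaveDalangAux

open WaveDalangAux in
/-- Dalang's condition for the stochastic wave equation:
`∫₀^T ∫ (sin(t|ξ|)/|ξ|)² μ(dξ) dt < ∞` for some (equivalently every) `T > 0` iff
`∫ (1+|ξ|²)⁻¹ μ(dξ) < ∞`, the integrand being `t²` when `ξ = 0`. -/
theorem wave_dalang_condition (d : ℕ) (μ : Measure (EuclideanSpace ℝ (Fin d))) :
    ((∃ T : ℝ, 0 < T ∧
        ∫⁻ t in Set.Ioc (0 : ℝ) T,
          ∫⁻ ξ, ENNReal.ofReal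
            (if ξ = 0 then t ^ 2 else (Real.sin (t * ‖ξ‖) / ‖ξ‖) ^ 2) ∂μ < ⊤) ↔
      ∫⁻ ξ, ENNReal.ofReal (1 / (1 + ‖ξ‖ ^ 2)) ∂μ < ⊤) ∧
    ((∀ T : ℝ, 0 < T →
        ∫⁻ t in Set.Ioc (0 : ℝ) T,
          ∫⁻ ξ, ENNReal.ofReal
            (if ξ = 0 then t ^ 2 else (Real.sin (t * ‖ξ‖) / ‖ξ‖) ^ 2) ∂μ < ⊤) ↔
      ∫⁻ ξ, ENNReal.ofReal (1 / (1 + ‖ξ‖ ^ 2)) ∂μ < ⊤) := by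
  by_cases hfin : ∀ n : ℕ, μ (Metric.closedBall 0 n) ≠ ⊤
  · have hspan : ⋃ n : ℕ, Metric.closedBall (0 : EuclideanSpace ℝ (Fin d)) n = Set.univ := by
      apply Set.eq_univ_of_forall
      intro ξ
      exact Set.mem_iUnion.2 ⟨⌈‖ξ‖⌉₊, by
        simpa [Metric.mem_closedBall, dist_zero_right] using Nat.le_ceil ‖ξ‖⟩
    haveI : SigmaFinite μ := ⟨⟨⟨fun n => Metric.closedBall 0 n, fun _ => trivial,
      fun n => (hfin n).lt_top, hspan⟩⟩⟩
    constructor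
    · constructor
      · rintro ⟨T, hT, h⟩
        exact (main_iff d μ T hT).1 h
      · intro h
        exact ⟨1, one_pos, (main_iff d μ 1 one_pos).2 h⟩
    · constructor
      · intro h
        exact (main_iff d μ 1 one_pos).1 (h 1 one_pos)
      · intro h T hT
        exact (main_iff d μ T hT).2 h
  · push_neg at hfin
    obtain ⟨n, hn⟩ := hfin
    have hR : (1 : ℝ) ≤ (n : ℝ) + 1 := by
      have := Nat.cast_nonneg (α := ℝ) n; linarith
    have hμR : μ (Metric.closedBall 0 ((n : ℝ) + 1)) = ⊤ := by
      rw [eq_top_iff, ← hn]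
      exact measure_mono (Metric.closedBall_subset_closedBall (by linarith))
    have hI := bad_I d μ (lt_of_lt_of_le one_pos hR) hμR
    have hdbl := bad_double d μ hR hμR
    constructor
    · constructor
      · rintro ⟨T, hT, h⟩
        exact absurd (hdbl T hT) h.ne
      · intro h
        exact absurd hI h.ne
    · constructor
      · intro h
        exact absurd (hdbl 1 one_pos) (h 1 one_pos).ne
      · intro h
        exact absurd hI h.ne
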